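/- For every d ≥ 1, the set { (σ − X)/‖σ − X‖ : σ, X ∈ H(d), σ positive semidefinite of rank 1, X positive semidefinite, X ≠ σ } is equal to K := {Y ∈ H(d) : λ₂(Y) ≤ 0, ‖Y‖ = 1}. -/

import Mathlib

open Matrix ComplexOrder

noncomputable def frobNorm {n m : Type*} [Fintype n] [Fintype m] {𝕜 : Type*} [RCLike 𝕜]
    (X : Matrix n m 𝕜) : ℝ :=
  Real.sqrt (∑ i, ∑ j, ‖X i j‖ ^ 2)

def IsPOVM {d m : ℕ} (P : Fin m → Matrix (Fin d) (Fin d) ℂ) : Prop :=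
  (∀ j, (P j).PosSemidef) ∧ (∑ j, P j) = 1

def IsMeasScheme {d l m : ℕ} (Q : Fin l → Fin m → Matrix (Fin d) (Fin d) ℂ) : Prop :=
  ∀ i, IsPOVM (Q i)

noncomputable def measMap {d l m : ℕ} (Q : Fin l → Fin m → Matrix (Fin d) (Fin d) ℂ)
    (X : Matrix (Fin d) (Fin d) ℂ) : Matrix (Fin l) (Fin m) ℝ :=
  Matrix.of fun i j => (Matrix.trace (X * Q i j)).re

noncomputable def pureState {d : ℕ} (ψ : Fin d → ℂ) : Matrix (Fin d) (Fin d) ℂ :=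
  Matrix.vecMulVec ψ (star ψ)

def IsState {d : ℕ} (ρ : Matrix (Fin d) (Fin d) ℂ) : Prop :=
  ρ.PosSemidef ∧ ρ.trace = 1

def DeterminesPure {d l m : ℕ} (Q : Fin l → Fin m → Matrix (Fin d) (Fin d) ℂ) : Prop :=
  ∀ ψ : Fin d → ℂ, (∑ k, Complex.normSq (ψ k)) = 1 →
    ∀ ρ : Matrix (Fin d) (Fin d) ℂ, IsState ρ →
      measMap Q (pureState ψ) = measMap Q ρ → ρ = pureState ψ

noncomputable def posEigCount {d : ℕ} {X : Matrix (Fin d) (Fin d) ℂ} (hX : X.IsHermitian) : ℕ :=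
  Nat.card {i : Fin d // 0 < hX.eigenvalues i}

def Kset (d : ℕ) : Set (Matrix (Fin d) (Fin d) ℂ) :=
  {X | ∃ hX : X.IsHermitian, posEigCount hX ≤ 1 ∧ frobNorm X = 1}

noncomputable def opNormHerm {d l m : ℕ}
    (T : Matrix (Fin d) (Fin d) ℂ → Matrix (Fin l) (Fin m) ℝ) : ℝ :=
  sSup {r : ℝ | ∃ X : Matrix (Fin d) (Fin d) ℂ, X.IsHermitian ∧ frobNorm X = 1 ∧ r = frobNorm (T X)}

/- auxiliary lemmas -/
lemma frobNorm_smul {n m : Type*} [Fintype n] [Fintype m]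
    (r : ℝ) (X : Matrix n m ℂ) : frobNorm (r • X) = |r| * frobNorm X := by
  unfold frobNorm
  rw [← Real.sqrt_sq_eq_abs, ← Real.sqrt_mul (sq_nonneg r)]
  congr 1
  rw [Finset.mul_sum]
  refine Finset.sum_congr rfl fun i _ => ?_
  rw [Finset.mul_sum]
  refine Finset.sum_congr rfl fun j _ => ?_
  simp [Matrix.smul_apply, norm_smul, mul_pow]

lemma frobNorm_eq_zero_iff {n m : Type*} [Fintype n] [Fintype m] {𝕜 : Type*} [RCLike 𝕜]
    {X : Matrix n m 𝕜} : frobNorm X = 0 ↔ X = 0 := by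
  unfold frobNorm
  rw [Real.sqrt_eq_zero (by positivity)]
  constructor
  · intro h
    ext i j
    have h1 : ∀ i ∈ Finset.univ, (0:ℝ) ≤ ∑ j, ‖X i j‖ ^ 2 := fun i _ => by positivity
    have := (Finset.sum_eq_zero_iff_of_nonneg h1).mp h i (Finset.mem_univ i)
    have h2 : ∀ j ∈ Finset.univ, (0:ℝ) ≤ ‖X i j‖ ^ 2 := fun j _ => by positivity
    have := (Finset.sum_eq_zero_iff_of_nonneg h2).mp this j (Finset.mem_univ j)
    simpa using this
  · intro h; subst h; simp

lemma frobNorm_pos {n m : Type*} [Fintype n] [Fintype m] {𝕜 : Type*} [RCLike 𝕜]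
    {X : Matrix n m 𝕜} (h : X ≠ 0) : 0 < frobNorm X :=
  lt_of_le_of_ne (Real.sqrt_nonneg _) (fun h' => h (frobNorm_eq_zero_iff.mp h'.symm))

lemma real_smul_matrix {d : ℕ} (r : ℝ) (M : Matrix (Fin d) (Fin d) ℂ) :
    r • M = (r : ℂ) • M := by
  ext i j
  simp [Matrix.smul_apply, Complex.real_smul]

lemma psd_complex_smul {d : ℕ} {A : Matrix (Fin d) (Fin d) ℂ} (hA : A.PosSemidef)
    {c : ℝ} (hc : 0 ≤ c) : ((c:ℂ) • A).PosSemidef := by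
  refine Matrix.posSemidef_iff_dotProduct_mulVec.mpr ⟨?_, ?_⟩
  · rw [Matrix.IsHermitian, Matrix.conjTranspose_smul, hA.1.eq, Complex.star_def,
      Complex.conj_ofReal]
  · intro x
    rw [Matrix.smul_mulVec, dotProduct_smul, smul_eq_mul]
    exact mul_nonneg (by exact_mod_cast hc) (hA.dotProduct_mulVec_nonneg x)

lemma rank_complex_smul {d : ℕ} (A : Matrix (Fin d) (Fin d) ℂ) {c : ℂ} (hc : c ≠ 0) :
    (c • A).rank = A.rank := by
  have h1 : c • A = (c • (1 : Matrix (Fin d) (Fin d) ℂ)) * A := by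
    rw [smul_mul_assoc, one_mul]
  rw [h1]
  apply Matrix.rank_mul_eq_right_of_isUnit_det
  rw [Matrix.det_smul, Matrix.det_one, mul_one]
  exact IsUnit.pow _ (isUnit_iff_ne_zero.mpr hc)

lemma posEig_le_one {d : ℕ} {M σ : Matrix (Fin d) (Fin d) ℂ} (hM : M.IsHermitian)
    (hσ : σ.PosSemidef) (hr : σ.rank ≤ 1) (hle : (σ - M).PosSemidef) :
    Nat.card {i : Fin d // 0 < hM.eigenvalues i} ≤ 1 := by
  rw [Nat.card_eq_fintype_card, Fintype.card_le_one_iff]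
  rintro ⟨i, hi⟩ ⟨j, hj⟩
  by_contra hne
  have hij : i ≠ j := fun h => hne (by simp [h])
  set u : Fin d → ℂ := ⇑(hM.eigenvectorBasis i) with hu
  set w : Fin d → ℂ := ⇑(hM.eigenvectorBasis j) with hw
  -- the linear map (a,b) ↦ σ *ᵥ (a • u + b • w)
  set ψ : (ℂ × ℂ) →ₗ[ℂ] (Fin d → ℂ) :=
    (LinearMap.fst ℂ ℂ ℂ).smulRight u + (LinearMap.snd ℂ ℂ ℂ).smulRight w with hψ
  set φ : (ℂ × ℂ) →ₗ[ℂ] (Fin d → ℂ) := σ.mulVecLin.comp ψ with hφ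
  have hker : LinearMap.ker φ ≠ ⊥ := by
    intro hbot
    have hinj : Function.Injective φ := LinearMap.ker_eq_bot.mp hbot
    have h2 : Module.finrank ℂ (ℂ × ℂ) = Module.finrank ℂ (LinearMap.range φ) :=
      (LinearMap.finrank_range_of_inj hinj).symm
    have hle2 : Module.finrank ℂ (LinearMap.range φ) ≤
        Module.finrank ℂ (LinearMap.range σ.mulVecLin) :=
      Submodule.finrank_mono (LinearMap.range_comp_le_range _ _)
    have : (2 : ℕ) ≤ 1 := by
      calc (2:ℕ) = Module.finrank ℂ (ℂ × ℂ) := by simp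
      _ ≤ Module.finrank ℂ (LinearMap.range σ.mulVecLin) := h2 ▸ hle2
      _ = σ.rank := rfl
      _ ≤ 1 := hr
    omega
  obtain ⟨p, hpker, hp0⟩ := (Submodule.ne_bot_iff _).mp hker
  set z : Fin d → ℂ := p.1 • u + p.2 • w with hz
  have hσz : σ *ᵥ z = 0 := by
    have := hpker
    simpa [hφ, hψ, hz, mulVecLin_apply] using this
  -- orthonormality
  have horth := hM.eigenvectorBasis.orthonormal
  have huu : star u ⬝ᵥ u = 1 := by
    have h2 : (inner ℂ (hM.eigenvectorBasis i) (hM.eigenvectorBasis i) : ℂ) = 1 := by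
      have := inner_self_eq_norm_sq_to_K (𝕜 := ℂ) (hM.eigenvectorBasis i)
      rw [this, horth.1 i]; norm_num
    rw [EuclideanSpace.inner_eq_star_dotProduct, dotProduct_comm] at h2
    exact h2
  have hww : star w ⬝ᵥ w = 1 := by
    have h2 : (inner ℂ (hM.eigenvectorBasis j) (hM.eigenvectorBasis j) : ℂ) = 1 := by
      have := inner_self_eq_norm_sq_to_K (𝕜 := ℂ) (hM.eigenvectorBasis j)
      rw [this, horth.1 j]; norm_num
    rw [EuclideanSpace.inner_eq_star_dotProduct, dotProduct_comm] at h2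
    exact h2
  have huw : star u ⬝ᵥ w = 0 := by
    have h2 : (inner ℂ (hM.eigenvectorBasis i) (hM.eigenvectorBasis j) : ℂ) = 0 := horth.2 hij
    rw [EuclideanSpace.inner_eq_star_dotProduct, dotProduct_comm] at h2
    exact h2
  have hwu : star w ⬝ᵥ u = 0 := by
    have h2 : (inner ℂ (hM.eigenvectorBasis j) (hM.eigenvectorBasis i) : ℂ) = 0 := horth.2 hij.symm
    rw [EuclideanSpace.inner_eq_star_dotProduct, dotProduct_comm] at h2
    exact h2
  -- M *ᵥ z
  have hsmul : ∀ (r : ℝ) (v : Fin d → ℂ), r • v = (r:ℂ) • v := fun r v =>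
    funext fun k => by simp [Pi.smul_apply, Complex.real_smul]
  have hMu : M *ᵥ u = (hM.eigenvalues i : ℂ) • u := by
    rw [hu, hM.mulVec_eigenvectorBasis, hsmul]
  have hMw : M *ᵥ w = (hM.eigenvalues j : ℂ) • w := by
    rw [hw, hM.mulVec_eigenvectorBasis, hsmul]
  have hquad : star z ⬝ᵥ (M *ᵥ z) =
      ((Complex.normSq p.1 * hM.eigenvalues i + Complex.normSq p.2 * hM.eigenvalues j : ℝ) : ℂ) := by
    rw [hz]
    rw [mulVec_add, mulVec_smul, mulVec_smul, hMu, hMw]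
    simp only [star_add, star_smul, add_dotProduct, dotProduct_add, smul_dotProduct,
      dotProduct_smul, huu, hww, huw, hwu, smul_eq_mul]
    push_cast
    simp [Complex.normSq_eq_conj_mul_self, RCLike.star_def]
    ring
  -- positivity of the quadratic form value
  have hquadpos : (0:ℝ) < Complex.normSq p.1 * hM.eigenvalues i
      + Complex.normSq p.2 * hM.eigenvalues j := by
    have hp : p.1 ≠ 0 ∨ p.2 ≠ 0 := by
      by_contra h
      push_neg at h
      exact hp0 (Prod.ext h.1 h.2)
    rcases hp with h | h
    · have : 0 < Complex.normSq p.1 := Complex.normSq_pos.mpr h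
      have h1 : 0 < Complex.normSq p.1 * hM.eigenvalues i := mul_pos this hi
      have h2 : 0 ≤ Complex.normSq p.2 * hM.eigenvalues j :=
        mul_nonneg (Complex.normSq_nonneg _) hj.le
      linarith
    · have : 0 < Complex.normSq p.2 := Complex.normSq_pos.mpr h
      have h2 : 0 < Complex.normSq p.2 * hM.eigenvalues j := mul_pos this hj
      have h1 : 0 ≤ Complex.normSq p.1 * hM.eigenvalues i :=
        mul_nonneg (Complex.normSq_nonneg _) hi.le
      linarith
  -- nonpositivity from σ - M PSD
  have hnonneg := hle.dotProduct_mulVec_nonneg z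
  rw [sub_mulVec, dotProduct_sub, hσz, dotProduct_zero, zero_sub] at hnonneg
  rw [hquad] at hnonneg
  have : (0:ℝ) ≤ -(Complex.normSq p.1 * hM.eigenvalues i + Complex.normSq p.2 * hM.eigenvalues j) := by
    have := hnonneg
    rw [← Complex.ofReal_neg] at this
    exact_mod_cast this
  linarith

lemma kset_construct (d : ℕ) (hd : 0 < d) (Y : Matrix (Fin d) (Fin d) ℂ) (hY : Y.IsHermitian)
    (hcount : Nat.card {i : Fin d // 0 < hY.eigenvalues i} ≤ 1)
    (hfY : Y ≠ 0) :
    ∃ σ X : Matrix (Fin d) (Fin d) ℂ, σ.PosSemidef ∧ σ.rank = 1 ∧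
      X.PosSemidef ∧ X ≠ σ ∧ σ - X = Y := by
  classical
  set μ := hY.eigenvalues with hμ
  obtain ⟨i₀, hneg⟩ : ∃ i₀ : Fin d, ∀ j, j ≠ i₀ → μ j ≤ 0 := by
    by_cases hex : ∃ i, 0 < μ i
    · obtain ⟨i₀, hi₀⟩ := hex
      refine ⟨i₀, fun j hj => ?_⟩
      by_contra h
      push_neg at h
      rw [Nat.card_eq_fintype_card] at hcount
      have := Fintype.card_le_one_iff.mp hcount ⟨j, h⟩ ⟨i₀, hi₀⟩
      exact hj (congrArg Subtype.val this)
    · push_neg at hex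
      exact ⟨⟨0, hd⟩, fun j _ => le_of_not_gt (fun h => (hex j).not_gt h)⟩
  set g : Fin d → ℝ := fun j => if j = i₀ then max (μ i₀) 1 else 0 with hg
  set V : Matrix (Fin d) (Fin d) ℂ := ↑(Matrix.IsHermitian.eigenvectorUnitary hY) with hV
  have hmem := (Matrix.IsHermitian.eigenvectorUnitary hY).2
  rw [Unitary.mem_iff] at hmem
  have hdetV : IsUnit V.det :=
    IsUnit.of_mul_eq_one (star V).det (by rw [← det_mul, hmem.2, det_one])
  have hdetsV : IsUnit (star V).det :=
    IsUnit.of_mul_eq_one V.det (by rw [← det_mul, hmem.1, det_one])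
  set σ : Matrix (Fin d) (Fin d) ℂ := V * diagonal (fun j => ((g j : ℝ) : ℂ)) * star V with hσdef
  set X : Matrix (Fin d) (Fin d) ℂ :=
    V * diagonal (fun j => ((g j - μ j : ℝ) : ℂ)) * star V with hXdef
  have hsub : σ - X = Y := by
    have hdd : (diagonal (fun j => ((g j : ℝ) : ℂ)) - diagonal (fun j => ((g j - μ j : ℝ) : ℂ)))
        = diagonal (RCLike.ofReal ∘ μ) := by
      have hfun : (fun j => ((g j : ℝ) : ℂ) - ((g j - μ j : ℝ) : ℂ)) = RCLike.ofReal ∘ μ := by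
        funext j
        show ((g j : ℝ) : ℂ) - ((g j - μ j : ℝ) : ℂ) = ((μ j : ℝ) : ℂ)
        push_cast
        ring
      rw [diagonal_sub, hfun]
    rw [hσdef, hXdef, ← sub_mul, ← mul_sub, hdd]
    exact hY.spectral_theorem.symm
  have hσpsd : σ.PosSemidef := by
    have hdiag : (diagonal (fun j => ((g j : ℝ) : ℂ))).PosSemidef := by
      refine posSemidef_diagonal_iff.mpr fun j => ?_
      rw [Complex.zero_le_real]
      by_cases h : j = i₀ <;> simp [hg, h, le_max_iff]
    rw [hσdef, Matrix.star_eq_conjTranspose]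
    exact hdiag.mul_mul_conjTranspose_same V
  have hXpsd : X.PosSemidef := by
    have hdiag : (diagonal (fun j => ((g j - μ j : ℝ) : ℂ))).PosSemidef := by
      refine posSemidef_diagonal_iff.mpr fun j => ?_
      rw [Complex.zero_le_real, sub_nonneg]
      by_cases h : j = i₀
      · subst h; simp [hg, le_max_iff]
      · simp [hg, h]
        exact hneg j h
    rw [hXdef, Matrix.star_eq_conjTranspose]
    exact hdiag.mul_mul_conjTranspose_same V
  have hrank : σ.rank = 1 := by
    rw [hσdef, mul_assoc, Matrix.rank_mul_eq_right_of_isUnit_det V _ hdetV,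
      Matrix.rank_mul_eq_left_of_isUnit_det (star V) _ hdetsV, Matrix.rank_diagonal]
    have hequiv : ∀ j : Fin d, (((g j : ℝ) : ℂ) ≠ 0) ↔ j = i₀ := by
      intro j
      by_cases h : j = i₀
      · subst h
        have h1 : (0:ℝ) < max (μ j) 1 := lt_of_lt_of_le one_pos (le_max_right _ _)
        simp [hg, Complex.ofReal_ne_zero, h1.ne']
      · simp [hg, h]
    rw [Fintype.card_congr (Equiv.subtypeEquivRight hequiv)]
    exact Fintype.card_subtype_eq i₀
  refine ⟨σ, X, hσpsd, hrank, hXpsd, ?_, hsub⟩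
  intro h
  apply hfY
  rw [← hsub, h, sub_self]

theorem stmt10 (d : ℕ) (hd : 0 < d) :
    {Y : Matrix (Fin d) (Fin d) ℂ |
        ∃ σ X : Matrix (Fin d) (Fin d) ℂ, σ.PosSemidef ∧ σ.rank = 1 ∧
          X.PosSemidef ∧ X ≠ σ ∧ Y = (frobNorm (σ - X))⁻¹ • (σ - X)} = Kset d := by
  ext Y
  constructor
  · rintro ⟨σ, X, hσ, hrk, hX, hne, hYeq⟩
    have hM0 : σ - X ≠ 0 := sub_ne_zero_of_ne (fun h => hne h.symm)
    have hfpos : 0 < frobNorm (σ - X) := frobNorm_pos hM0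
    set c : ℝ := (frobNorm (σ - X))⁻¹ with hc
    have hcpos : 0 < c := inv_pos.mpr hfpos
    have hMH : (σ - X).IsHermitian := hσ.1.sub hX.1
    have hYc : Y = (c : ℂ) • (σ - X) := by rw [hYeq, real_smul_matrix]
    have hHerm : Y.IsHermitian := by
      rw [hYc, Matrix.IsHermitian, Matrix.conjTranspose_smul, hMH.eq, Complex.star_def,
        Complex.conj_ofReal]
    refine ⟨hHerm, ?_, ?_⟩
    · -- at most one positive eigenvalue
      unfold posEigCount
      refine posEig_le_one hHerm (σ := (c : ℂ) • σ) (psd_complex_smul hσ hcpos.le) ?_ ?_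
      · rw [rank_complex_smul σ (by exact_mod_cast hcpos.ne')]
        exact hrk.le
      · have : (c : ℂ) • σ - Y = (c : ℂ) • X := by
          rw [hYc, ← smul_sub, sub_sub_cancel]
        rw [this]
        exact psd_complex_smul hX hcpos.le
    · rw [hYeq, frobNorm_smul, abs_of_pos hcpos, hc, inv_mul_cancel₀ hfpos.ne']
  · rintro ⟨hH, hcount, hfrob⟩
    have hY0 : Y ≠ 0 := by
      intro h
      rw [h, frobNorm_eq_zero_iff.mpr rfl] at hfrob
      exact one_ne_zero hfrob.symm
    obtain ⟨σ, X, hσpsd, hrank, hXpsd, hXne, hsub⟩ :=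
      kset_construct d hd Y hH (by rw [posEigCount] at hcount; exact hcount) hY0
    exact ⟨σ, X, hσpsd, hrank, hXpsd, hXne, by rw [hsub, hfrob, inv_one, one_smul]⟩
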